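/- Let α > 0, X a complex Banach space and (T_n)_{n∈ℕ₀} a sequence of bounded linear operators on X. Then the following are equivalent: (i) T_n = ∑_{j=0}^n k^α(n-j)·(T_1 − α·I)^j for all n ∈ ℕ₀; (ii) T_0 = I and the functional equation T_n T_m = ∑_{u=m}^{n+m} k^α(n+m-u)·T_u − ∑_{u=0}^{n-1} k^α(n+m-u)·T_u holds for all n ≥ 1 and m ∈ ℕ₀. -/

import Mathlib

/-- The Cesàro kernel `k^α(n) = Γ(n+α)/(Γ(α)·Γ(n+1))`. -/
noncomputable def cesK (α : ℝ) (n : ℕ) : ℝ :=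
  Real.Gamma ((n : ℝ) + α) / (Real.Gamma α * Real.Gamma ((n : ℝ) + 1))


lemma cesK_zero {α : ℝ} (hα : 0 < α) : cesK α 0 = 1 := by
  have h := (Real.Gamma_pos_of_pos hα).ne'
  simp [cesK, Real.Gamma_one, h]

lemma cesK_one {α : ℝ} (hα : 0 < α) : cesK α 1 = α := by
  have h := (Real.Gamma_pos_of_pos hα).ne'
  have : ((1:ℕ):ℝ) + α = α + 1 := by push_cast; ring
  rw [cesK, this, Real.Gamma_add_one hα.ne']
  norm_num [Real.Gamma_two]
  field_simp

lemma cesK_star (α : ℝ) (hα : 0 < α) (n m : ℕ) :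
    ∑ i ∈ Finset.range (n+1), cesK α (n-i) * cesK α (m+i+1)
      = cesK α (n+m+1) + ∑ u ∈ Finset.range n, cesK α (n+m-u) * cesK α (u+1) := by
  have h1 : ∑ i ∈ Finset.range (n+1), cesK α (n-i) * cesK α (m+i+1)
      = ∑ i ∈ Finset.range (n+1), cesK α i * cesK α (m+(n-i)+1) := by
    rw [← Finset.sum_range_reflect]
    refine Finset.sum_congr rfl fun i hi => ?_
    simp only [Finset.mem_range] at hi
    rw [show n+1-1-i = n-i from by omega, show n-(n-i) = i from by omega]
  rw [h1, Finset.sum_range_succ']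
  rw [show cesK α 0 * cesK α (m+(n-0)+1) = cesK α (n+m+1) from by
    rw [cesK_zero hα, one_mul]; congr 1; omega]
  rw [add_comm]
  congr 1
  refine Finset.sum_congr rfl fun i hi => ?_
  simp only [Finset.mem_range] at hi
  rw [mul_comm, show m+(n-(i+1))+1 = n+m-i from by omega]

section ops
variable {X : Type*} [NormedAddCommGroup X] [NormedSpace ℂ X]

noncomputable def cesA (α : ℝ) (S : X →L[ℂ] X) (n : ℕ) : X →L[ℂ] X :=
  ∑ j ∈ Finset.range (n+1), (cesK α (n-j) : ℂ) • S ^ j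

lemma cesA_zero {α : ℝ} (hα : 0 < α) (S : X →L[ℂ] X) : cesA α S 0 = 1 := by
  simp [cesA, cesK_zero hα]

lemma cesA_succ (α : ℝ) (S : X →L[ℂ] X) (m : ℕ) :
    cesA α S (m+1) = S * cesA α S m + (cesK α (m+1) : ℂ) • 1 := by
  rw [cesA, cesA, Finset.sum_range_succ' _ (m+1), Finset.mul_sum]
  congr 1
  refine Finset.sum_congr rfl fun j hj => ?_
  rw [show m+1-(j+1) = m-j from by omega, pow_succ', mul_smul_comm]

lemma cesA_mul_left (α : ℝ) (S : X →L[ℂ] X) (u : ℕ) :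
    S * cesA α S u = cesA α S (u+1) - (cesK α (u+1) : ℂ) • 1 := by
  rw [cesA_succ]; abel

lemma cesA_key {α : ℝ} (hα : 0 < α) (S : X →L[ℂ] X) :
    ∀ n, 1 ≤ n → ∀ m, cesA α S n * cesA α S m
      = (∑ i ∈ Finset.range (n+1), (cesK α (n-i) : ℂ) • cesA α S (m+i))
        - ∑ u ∈ Finset.range n, (cesK α (n+m-u) : ℂ) • cesA α S u := by
  intro n hn
  induction n with
  | zero => omega
  | succ n ih =>
    intro m
    rcases Nat.eq_zero_or_pos n with rfl | hpos
    · have hA1 : cesA α S 1 = (α:ℂ) • 1 + S := by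
        simp [cesA, Finset.sum_range_succ, cesK_zero hα, cesK_one hα]
      rw [hA1, add_mul, smul_mul_assoc, one_mul, cesA_mul_left]
      rw [Finset.sum_range_succ, Finset.sum_range_succ, Finset.sum_range_zero,
        Finset.sum_range_one]
      simp only [Nat.zero_add, Nat.add_zero, Nat.sub_zero, Nat.sub_self,
        cesK_zero hα, cesK_one hα, cesA_zero hα, Complex.ofReal_one, one_smul]
      rw [show (1:ℕ)+m = m+1 from by omega]
      abel
    · have ihm := ih hpos
      rw [cesA_succ, add_mul, smul_mul_assoc, one_mul, mul_assoc, ihm m]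
      rw [mul_sub, Finset.mul_sum, Finset.mul_sum]
      simp_rw [mul_smul_comm, cesA_mul_left, smul_sub]
      rw [Finset.sum_sub_distrib, Finset.sum_sub_distrib]
      have e1 : ∑ i ∈ Finset.range (n+1+1), (cesK α (n+1-i):ℂ) • cesA α S (m+i)
          = (∑ i ∈ Finset.range (n+1), (cesK α (n-i):ℂ) • cesA α S (m+i+1))
            + (cesK α (n+1):ℂ) • cesA α S m := by
        rw [Finset.sum_range_succ']
        congr 1
        refine Finset.sum_congr rfl fun i hi => ?_
        rw [show n+1-(i+1) = n-i from by omega, show m+(i+1) = m+i+1 from by omega]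
      have e2 : ∑ u ∈ Finset.range (n+1), (cesK α (n+1+m-u):ℂ) • cesA α S u
          = (∑ u ∈ Finset.range n, (cesK α (n+m-u):ℂ) • cesA α S (u+1))
            + (cesK α (n+m+1):ℂ) • 1 := by
        rw [Finset.sum_range_succ']
        congr 1
        · refine Finset.sum_congr rfl fun u hu => ?_
          rw [show n+1+m-(u+1) = n+m-u from by omega]
        · rw [show n+1+m-0 = n+m+1 from by omega, cesA_zero hα]
      have hs : (∑ i ∈ Finset.range (n+1), ((cesK α (n-i) * cesK α (m+i+1) : ℝ) : ℂ))
          = ((cesK α (n+m+1) : ℝ) : ℂ)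
            + ∑ u ∈ Finset.range n, ((cesK α (n+m-u) * cesK α (u+1) : ℝ) : ℂ) := by
        exact_mod_cast congrArg (fun x : ℝ => (x : ℂ)) (cesK_star α hα n m)
      have e3 : ∑ i ∈ Finset.range (n+1),
            (cesK α (n-i):ℂ) • ((cesK α (m+i+1):ℂ) • (1 : X →L[ℂ] X))
          = (cesK α (n+m+1):ℂ) • 1
            + ∑ u ∈ Finset.range n,
                (cesK α (n+m-u):ℂ) • ((cesK α (u+1):ℂ) • (1 : X →L[ℂ] X)) := by
        simp_rw [smul_smul, ← Complex.ofReal_mul]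
        rw [← Finset.sum_smul, ← Finset.sum_smul, hs, add_smul]
      rw [e1, e2, e3]
      abel

end ops

theorem stmt14 {X : Type*} [NormedAddCommGroup X] [NormedSpace ℂ X] [CompleteSpace X]
    (α : ℝ) (hα : 0 < α) (T : ℕ → X →L[ℂ] X) :
    (∀ n : ℕ, T n =
        ∑ j ∈ Finset.range (n + 1),
          (cesK α (n - j) : ℂ) • (T 1 - (α : ℂ) • (1 : X →L[ℂ] X)) ^ j) ↔
      (T 0 = 1 ∧ ∀ n m : ℕ, 1 ≤ n →
        T n * T m =
          (∑ u ∈ Finset.Icc m (n + m), (cesK α (n + m - u) : ℂ) • T u) -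
            ∑ u ∈ Finset.range n, (cesK α (n + m - u) : ℂ) • T u) := by
  set S : X →L[ℂ] X := T 1 - (α : ℂ) • 1 with hS
  have hIcc : ∀ (B : ℕ → X →L[ℂ] X) (n m : ℕ),
      ∑ u ∈ Finset.Icc m (n + m), (cesK α (n + m - u) : ℂ) • B u
        = ∑ i ∈ Finset.range (n + 1), (cesK α (n - i) : ℂ) • B (m + i) := by
    intro B n m
    rw [← Finset.Ico_add_one_right_eq_Icc, Finset.sum_Ico_eq_sum_range,
      show n + m + 1 - m = n + 1 from by omega]
    exact Finset.sum_congr rfl fun i hi => by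
      rw [show n + m - (m + i) = n - i from by omega]
  constructor
  · intro hT
    have hT' : ∀ n, T n = cesA α S n := hT
    constructor
    · rw [hT' 0, cesA_zero hα]
    · intro n m hn
      simp only [hT']
      rw [hIcc]
      exact cesA_key hα S n hn m
  · rintro ⟨h0, hfe⟩ n
    have hrec : ∀ m, T (m + 1) = S * T m + (cesK α (m + 1) : ℂ) • 1 := by
      intro m
      have h := hfe 1 m le_rfl
      rw [hIcc] at h
      rw [Finset.sum_range_succ, Finset.sum_range_one, Finset.sum_range_one] at h
      rw [show (1:ℕ) - 0 = 1 from rfl, show (1:ℕ) - 1 = 0 from rfl,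
        show (1:ℕ) + m - 0 = m + 1 from by omega, cesK_one hα, cesK_zero hα, h0] at h
      simp only [Complex.ofReal_one, one_smul, Nat.add_zero] at h
      have hS' : S * T m = T 1 * T m - (α:ℂ) • T m := by
        rw [hS, sub_mul, smul_mul_assoc, one_mul]
      rw [hS', h]
      abel
    have hall : ∀ k, T k = cesA α S k := by
      intro k
      induction k with
      | zero => rw [h0, cesA_zero hα]
      | succ k ih => rw [hrec k, ih, ← cesA_succ]
    exact hall n
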